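/- Let t ≥ 0, let c_1, …, c_t be positive integers, let h_1, …, h_t ∈ ℕ, and set H := h_1 + ⋯ + h_t. Let f ∈ ℂ[X] be a nonzero polynomial such that ∏_{i=1}^t (X^{c_i} − 1)^{h_i} divides f in ℂ[X]. Then f has at least H + 1 nonzero coefficients. -/

import Mathlib

open Polynomial

private lemma aux11 : ∀ (n : ℕ) (f : Polynomial ℂ), f.natDegree = n → ∀ (H : ℕ), f ≠ 0 →
    ((X : Polynomial ℂ) - 1) ^ H ∣ f → H < f.support.card := by
  intro n
  induction n using Nat.strong_induction_on with
  | _ n IH =>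
    intro f hfn H hf hdvd
    match H with
    | 0 =>
      simpa [Finset.card_pos, Polynomial.nonempty_support_iff] using hf
    | H + 1 =>
      by_cases hX : (X : Polynomial ℂ) ∣ f
      · obtain ⟨g, rfl⟩ := hX
        have hg : g ≠ 0 := right_ne_zero_of_mul hf
        have hXne : (X : Polynomial ℂ) ≠ 0 := X_ne_zero
        have hdeg : g.natDegree < n := by
          rw [← hfn, natDegree_mul hXne hg, natDegree_X]; omega
        have hcop : IsCoprime ((X : Polynomial ℂ) - 1) X := by
          refine ⟨-1, 1, by ring⟩
        have hdvd' : ((X : Polynomial ℂ) - 1) ^ (H + 1) ∣ g :=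
          ((hcop.pow_left).dvd_of_dvd_mul_left hdvd)
        have hcard : (X * g).support.card = g.support.card := by
          have : (X * g).support = g.support.image (· + 1) := by
            ext m
            simp only [Finset.mem_image, mem_support_iff]
            constructor
            · intro hm
              match m with
              | 0 => simp [coeff_X_mul_zero] at hm
              | m + 1 =>
                refine ⟨m, ?_, rfl⟩
                rwa [coeff_X_mul] at hm
            · rintro ⟨a, ha, rfl⟩
              rwa [coeff_X_mul]
          rw [this, Finset.card_image_of_injective _ (add_left_injective 1)]
        rw [hcard]
        exact IH _ hdeg g rfl (H + 1) hg hdvd'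
      · have h0 : f.coeff 0 ≠ 0 := by
          intro h
          exact hX (by simpa [X_dvd_iff] using h)
        have hd : ((X : Polynomial ℂ) - 1) ^ H ∣ derivative f := by
          obtain ⟨k, rfl⟩ := hdvd
          rw [derivative_mul, derivative_pow]
          simp only [Nat.add_sub_cancel]
          exact dvd_add (((dvd_mul_left _ _).mul_right _).mul_right _)
            ((pow_dvd_pow _ (Nat.le_succ H)).mul_right _)
        have hd0 : derivative f ≠ 0 := by
          intro h
          have h1 : f.natDegree = 0 := natDegree_eq_zero_of_derivative_eq_zero h
          have h2 : (((X : Polynomial ℂ) - 1) ^ (H + 1)).natDegree ≤ f.natDegree :=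
            natDegree_le_of_dvd hdvd hf
          have h3 : ((X : Polynomial ℂ) - 1).natDegree = 1 := by
            simpa using natDegree_X_sub_C (1 : ℂ)
          rw [natDegree_pow, h3] at h2
          omega
        have hne : f.natDegree ≠ 0 := by
          intro h
          exact hd0 (by
            have := natDegree_eq_zero.mp h
            obtain ⟨a, rfl⟩ := this
            simp)
        have hlt : (derivative f).natDegree < n := hfn ▸ natDegree_derivative_lt hne
        have hIH : H < (derivative f).support.card :=
          IH _ hlt (derivative f) rfl H hd0 hd
        have hcard : f.support.card = (derivative f).support.card + 1 := by
          have hset : f.support = insert 0 ((derivative f).support.image (· + 1)) := by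
            ext m
            simp only [Finset.mem_insert, Finset.mem_image]
            constructor
            · intro hm
              match m with
              | 0 => exact Or.inl rfl
              | m + 1 =>
                exact Or.inr ⟨m, mem_support_derivative.mpr hm, rfl⟩
            · rintro (rfl | ⟨a, ha, rfl⟩)
              · exact mem_support_iff.mpr h0
              · exact mem_support_derivative.mp ha
          rw [hset, Finset.card_insert_of_notMem (by simp),
            Finset.card_image_of_injective _ (add_left_injective 1)]
        omega

theorem stmt11 (t : ℕ) (c : Fin t → ℕ) (hc : ∀ i, 0 < c i) (h : Fin t → ℕ)
    (H : ℕ) (hH : H = ∑ i, h i) (f : Polynomial ℂ) (hf : f ≠ 0)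
    (hdvd : (∏ i, ((Polynomial.X : Polynomial ℂ) ^ (c i) - 1) ^ (h i)) ∣ f) :
    H + 1 ≤ f.support.card := by
  have key : ((X : Polynomial ℂ) - 1) ^ H ∣ f := by
    refine dvd_trans ?_ hdvd
    rw [hH, ← Finset.prod_pow_eq_pow_sum]
    refine Finset.prod_dvd_prod_of_dvd _ _ fun i _ => pow_dvd_pow_of_dvd ?_ _
    simpa using sub_dvd_pow_sub_pow (X : Polynomial ℂ) 1 (c i)
  exact aux11 f.natDegree f rfl H hf key
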